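/- (Theorem 1, max-circuit.) Let 0 < R_ON < R_OFF < R, let 0 ≤ Y ≤ X ≤ 1, and suppose the memristances M₁, M₂ : ℝ → ℝ of the max-circuit take values in [R_ON, R_OFF] and satisfy M₁(t) → R_ON and M₂(t) → R_OFF as t → ∞. Then the output voltage Z(t) = (X·M₂(t) + Y·M₁(t))/(M₁(t) + M₂(t) + M₁(t)M₂(t)/R) converges as t → ∞ to a limit L with |L − max(X,Y)| ≤ R_ON/R_OFF + R_ON/R; in particular, when R ≫ R_OFF ≫ R_ON the circuit computes max(X,Y) up to an arbitrarily small error. -/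

import Mathlib

/-- Theorem 1, max-circuit: the output voltage Z(t) converges to
a limit L with |L − max(X,Y)| ≤ R_ON/R_OFF + R_ON/R. -/
theorem memristor_max_circuit_computes_max
    (RON ROFF R X Y : ℝ)
    (hON : 0 < RON) (hONOFF : RON < ROFF) (hOFFR : ROFF < R)
    (hY : 0 ≤ Y) (hYX : Y ≤ X) (hX : X ≤ 1)
    (M₁ M₂ : ℝ → ℝ)
    (hM₁mem : ∀ t, M₁ t ∈ Set.Icc RON ROFF)
    (hM₂mem : ∀ t, M₂ t ∈ Set.Icc RON ROFF)
    (hM₁ : Filter.Tendsto M₁ Filter.atTop (nhds RON))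
    (hM₂ : Filter.Tendsto M₂ Filter.atTop (nhds ROFF)) :
    ∃ L : ℝ,
      Filter.Tendsto
        (fun t => (X * M₂ t + Y * M₁ t) / (M₁ t + M₂ t + M₁ t * M₂ t / R))
        Filter.atTop (nhds L) ∧
      |L - max X Y| ≤ RON / ROFF + RON / R := by
  have hR : 0 < R := lt_trans (lt_trans hON hONOFF) hOFFR
  have hOFF : 0 < ROFF := lt_trans hON hONOFF
  set D : ℝ := RON + ROFF + RON * ROFF / R with hD
  have hDpos : 0 < D := by positivity
  refine ⟨(X * ROFF + Y * RON) / D, ?_, ?_⟩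
  · exact Filter.Tendsto.div
      ((hM₂.const_mul X).add (hM₁.const_mul Y))
      ((hM₁.add hM₂).add ((hM₁.mul hM₂).div_const R)) hDpos.ne'
  · rw [max_eq_left hYX]
    have hLle : (X * ROFF + Y * RON) / D ≤ X := by
      rw [div_le_iff₀ hDpos, hD]
      nlinarith [mul_nonneg (sub_nonneg.2 hYX) hON.le,
        mul_nonneg (le_trans hY hYX) (by positivity : (0:ℝ) ≤ RON * ROFF / R)]
    rw [abs_sub_comm, abs_of_nonneg (sub_nonneg.2 hLle)]
    have hEq : X - (X * ROFF + Y * RON) / D = RON * (X - Y + X * ROFF / R) / D := by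
      rw [hD]; field_simp; ring
    rw [hEq]
    have h2 : RON * (X - Y + X * ROFF / R) / D ≤ RON * (1 + ROFF / R) / ROFF := by
      apply div_le_div₀ (by positivity)
      · have : X - Y + X * ROFF / R ≤ 1 + ROFF / R := by
          have : X * ROFF / R ≤ ROFF / R := by
            apply div_le_div_of_nonneg_right ?_ hR.le
            nlinarith
          linarith
        nlinarith
      · exact hOFF
      · rw [hD]
        have : 0 ≤ RON * ROFF / R := by positivity
        linarith
    calc RON * (X - Y + X * ROFF / R) / D ≤ RON * (1 + ROFF / R) / ROFF := h2
      _ = RON / ROFF + RON / R := by field_simp
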